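/- Let Ř be the super R-matrix on V⊗V and consider the weight-λ_d subspace of V^{⊗d} spanned by tensors ε_{τ(1)}⊗...⊗ε_{τ(d)} for τ ∈ S_d, where d < m+n. Every such basis vector w_τ is a nonzero ℂ(q)-multiple of h·w for some h in the subalgebra of End(V^{⊗d}) generated by Ř₁,...,Ř_{d-1}, where w = ε₁⊗ε₂⊗...⊗ε_d. -/

import Mathlib

set_option synthInstance.maxHeartbeats 400000
set_option maxHeartbeats 1000000

set_option maxHeartbeats 8000000

noncomputable section

abbrev K : Type := RatFunc ℂ

noncomputable def q : K := RatFunc.X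

/-- Parity: p(i) = 0 for the first m basis vectors, 1 for the rest. -/
def par (m : ℕ) {N : ℕ} (i : Fin N) : ℕ := if (i : ℕ) < m then 0 else 1

/-- Matrix unit E_{ab} (0-indexed). -/
def MU {N : ℕ} (a b : Fin N) : Matrix (Fin N) (Fin N) K :=
  Matrix.single a b 1

/-- Super tensor product of two matrices acting on V ⊗ V, where `pY` is the
parity of the second (homogeneous) factor: the Koszul sign rule
(X⊗Y)(u⊗w) = (-1)^{p(Y)p(u)} Xu ⊗ Yw is built into the matrix entries, so that
ordinary multiplication of these matrices realizes the super product. -/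
def st (m : ℕ) {N : ℕ} (X Y : Matrix (Fin N) (Fin N) K) (pY : ℕ) :
    Matrix (Fin N × Fin N) (Fin N × Fin N) K :=
  Matrix.of fun rc cc =>
    (-1 : K) ^ (pY * par m cc.1) * X rc.1 cc.1 * Y rc.2 cc.2

/-- The super R-matrix Ř on V ⊗ V. -/
def Rmat (m N : ℕ) : Matrix (Fin N × Fin N) (Fin N × Fin N) K :=
  (∑ i : Fin N, ((-1 : K) ^ par m i * q ^ ((-1 : ℤ) ^ par m i)) •
      st m (MU i i) (MU i i) 0)
  + (∑ i : Fin N, ∑ j : Fin N,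
      if i ≠ j then ((-1 : K) ^ par m i) • st m (MU j i) (MU i j) (par m i + par m j)
      else 0)
  + (∑ i : Fin N, ∑ j : Fin N,
      if (i : ℕ) < (j : ℕ) then (q - q⁻¹) • st m (MU i i) (MU j j) 0 else 0)

/-- Řⱼ acting on positions j, j+1 (0-indexed) of V^{⊗d}. -/
def Rop (m N d : ℕ) (j : ℕ) (hj : j + 1 < d) :
    Matrix (Fin d → Fin N) (Fin d → Fin N) K :=
  Matrix.of fun a b =>
    if ∀ k : Fin d, (k : ℕ) ≠ j → (k : ℕ) ≠ j + 1 → a k = b k then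
      Rmat m N (a ⟨j, by omega⟩, a ⟨j + 1, hj⟩) (b ⟨j, by omega⟩, b ⟨j + 1, hj⟩)
    else 0


lemma par_le_one (m N : ℕ) (i : Fin N) : par m i ≤ 1 := by unfold par; split <;> omega



lemma sign_helper (a b : ℕ) (ha : a ≤ 1) (hb : b ≤ 1) :
    (-1 : K) ^ a * (-1 : K) ^ ((a + b) * a) = (-1 : K) ^ (a * b) := by
  interval_cases a <;> interval_cases b <;> norm_num

lemma st_MU_apply (m N : ℕ) (a b c e : Fin N) (pY : ℕ) (u v x y : Fin N) :
    st m (MU a b) (MU c e) pY (u, v) (x, y) =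
      if a = u ∧ b = x ∧ c = v ∧ e = y then (-1 : K) ^ (pY * par m x) else 0 := by
  simp only [st, Matrix.of_apply, MU, Matrix.single]
  split_ifs <;> simp_all

lemma Rmat_entry (m N : ℕ) (u v x y : Fin N) (hxy : x ≠ y) :
    Rmat m N (u, v) (x, y) =
      (if u = y ∧ v = x then (-1 : K) ^ (par m x * par m y) else 0)
      + (if u = x ∧ v = y ∧ (x : ℕ) < (y : ℕ) then q - q⁻¹ else 0) := by
  classical
  have h1 : (∑ i : Fin N, ((-1 : K) ^ par m i * q ^ ((-1 : ℤ) ^ par m i)) •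
      st m (MU i i) (MU i i) 0) (u, v) (x, y) = 0 := by
    rw [Matrix.sum_apply]
    apply Finset.sum_eq_zero
    intro i _
    rw [Matrix.smul_apply, st_MU_apply, if_neg, smul_zero]
    rintro ⟨-, h2, -, h4⟩
    exact hxy (h2.symm.trans h4)
  have h2 : (∑ i : Fin N, ∑ j : Fin N,
      if i ≠ j then ((-1 : K) ^ par m i) • st m (MU j i) (MU i j) (par m i + par m j)
      else 0) (u, v) (x, y)
      = if u = y ∧ v = x then (-1 : K) ^ (par m x * par m y) else 0 := by
    rw [Matrix.sum_apply]
    rw [Finset.sum_eq_single x]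
    · rw [Matrix.sum_apply, Finset.sum_eq_single y]
      · rw [if_pos hxy, Matrix.smul_apply, st_MU_apply, smul_ite, smul_zero, smul_eq_mul]
        have hs := sign_helper (par m x) (par m y) (par_le_one m N x) (par_le_one m N y)
        by_cases h : u = y ∧ v = x
        · rw [if_pos ⟨h.1.symm, rfl, h.2.symm, rfl⟩, if_pos h, hs]
        · rw [if_neg, if_neg h]
          rintro ⟨h1', -, h3', -⟩
          exact h ⟨h1'.symm, h3'.symm⟩
      · intro j _ hjy
        split_ifs with h
        · rw [Matrix.smul_apply, st_MU_apply, if_neg, smul_zero]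
          rintro ⟨-, -, -, h4⟩
          exact hjy h4
        · rfl
      · intro h; exact absurd (Finset.mem_univ y) h
    · intro i _ hix
      rw [Matrix.sum_apply]
      apply Finset.sum_eq_zero
      intro j _
      split_ifs with h
      · rw [Matrix.smul_apply, st_MU_apply, if_neg, smul_zero]
        rintro ⟨-, h2', -, -⟩
        exact hix h2'
      · rfl
    · intro h; exact absurd (Finset.mem_univ x) h
  have h3 : (∑ i : Fin N, ∑ j : Fin N,
      if (i : ℕ) < (j : ℕ) then (q - q⁻¹) • st m (MU i i) (MU j j) 0 else 0) (u, v) (x, y)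
      = if u = x ∧ v = y ∧ (x : ℕ) < (y : ℕ) then q - q⁻¹ else 0 := by
    rw [Matrix.sum_apply]
    rw [Finset.sum_eq_single x]
    · rw [Matrix.sum_apply, Finset.sum_eq_single y]
      · by_cases hlt : (x : ℕ) < (y : ℕ)
        · rw [if_pos hlt, Matrix.smul_apply, st_MU_apply, smul_ite, smul_zero, smul_eq_mul]
          by_cases h : u = x ∧ v = y
          · rw [if_pos ⟨h.1.symm, rfl, h.2.symm, rfl⟩, if_pos ⟨h.1, h.2, hlt⟩,
              zero_mul, pow_zero, mul_one]
          · rw [if_neg, if_neg]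
            · rintro ⟨h1', h2', -⟩; exact h ⟨h1', h2'⟩
            · rintro ⟨h1', -, h3', -⟩; exact h ⟨h1'.symm, h3'.symm⟩
        · rw [if_neg hlt, Matrix.zero_apply, if_neg]
          rintro ⟨-, -, h'⟩; exact hlt h'
      · intro j _ hjy
        split_ifs with h
        · rw [Matrix.smul_apply, st_MU_apply, if_neg, smul_zero]
          rintro ⟨-, -, -, h4⟩
          exact hjy h4
        · rfl
      · intro h; exact absurd (Finset.mem_univ y) h
    · intro i _ hix
      rw [Matrix.sum_apply]
      apply Finset.sum_eq_zero
      intro j _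
      split_ifs with h
      · rw [Matrix.smul_apply, st_MU_apply, if_neg, smul_zero]
        rintro ⟨-, h2', -, -⟩
        exact hix h2'
      · rfl
    · intro h; exact absurd (Finset.mem_univ x) h
  simp only [Rmat, Matrix.add_apply]
  rw [h1, h2, h3, zero_add]

lemma Rop_single (m N d : ℕ) (j : ℕ) (hj : j + 1 < d) (b : Fin d → Fin N)
    (hne : b ⟨j, by omega⟩ ≠ b ⟨j + 1, hj⟩) :
    (Rop m N d j hj).mulVecLin (Pi.single b (1 : K)) =
      ((-1 : K) ^ (par m (b ⟨j, by omega⟩) * par m (b ⟨j + 1, hj⟩))) •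
        (Pi.single (b ∘ Equiv.swap (⟨j, by omega⟩ : Fin d) ⟨j + 1, hj⟩) (1 : K) :
          (Fin d → Fin N) → K)
      + (if ((b ⟨j, by omega⟩ : ℕ) < (b ⟨j + 1, hj⟩ : ℕ)) then q - q⁻¹ else 0) •
        (Pi.single b (1 : K) : (Fin d → Fin N) → K) := by
  classical
  set jf : Fin d := ⟨j, by omega⟩ with hjf
  set jf' : Fin d := ⟨j + 1, hj⟩ with hjf'
  have hjj : jf ≠ jf' := by simp [hjf, hjf', Fin.ext_iff]
  have hbswap_ne : b ∘ Equiv.swap jf jf' ≠ b := by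
    intro h
    have := congrFun h jf
    simp only [Function.comp_apply, Equiv.swap_apply_left] at this
    exact hne this.symm
  funext a
  rw [Matrix.mulVecLin_apply, Matrix.mulVec_single]
  simp only [mul_one, Pi.add_apply, Pi.smul_apply, smul_eq_mul]
  simp only [Rop, MulOpposite.op_one, one_smul, Matrix.col_apply, Matrix.of_apply]
  by_cases hC : ∀ k : Fin d, (k : ℕ) ≠ j → (k : ℕ) ≠ j + 1 → a k = b k
  · rw [if_pos hC, Rmat_entry m N _ _ _ _ hne]
    have key : ∀ u' : Fin d → Fin N, a jf = u' jf → a jf' = u' jf' →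
        (∀ k : Fin d, k ≠ jf → k ≠ jf' → a k = u' k) → a = u' := by
      intro u' hu1 hu2 hu3
      funext k
      by_cases hk1 : k = jf
      · subst hk1; exact hu1
      · by_cases hk2 : k = jf'
        · subst hk2; exact hu2
        · exact hu3 k hk1 hk2
    have hCk : ∀ k : Fin d, k ≠ jf → k ≠ jf' → a k = b k := by
      intro k hk1 hk2
      exact hC k (by simpa [hjf, Fin.ext_iff] using hk1)
        (by simpa [hjf', Fin.ext_iff] using hk2)
    have hCk' : ∀ k : Fin d, k ≠ jf → k ≠ jf' → a k = (b ∘ Equiv.swap jf jf') k := by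
      intro k hk1 hk2
      rw [hCk k hk1 hk2]
      simp [Equiv.swap_apply_of_ne_of_ne hk1 hk2]
    by_cases h1 : a = b ∘ Equiv.swap jf jf'
    · have ha1 : a jf = b jf' := by rw [h1]; simp
      have ha2 : a jf' = b jf := by rw [h1]; simp
      have hab : a ≠ b := h1 ▸ hbswap_ne
      rw [if_pos ⟨ha1, ha2⟩,
        if_neg (fun h => hne (ha1.symm.trans h.1).symm)]
      subst h1
      rw [Pi.single_eq_same, Pi.single_eq_of_ne hbswap_ne]
      ring
    · by_cases h2 : a = b
      · have ha1 : a jf = b jf := congrFun h2 jf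
        have ha2 : a jf' = b jf' := congrFun h2 jf'
        rw [if_neg (fun h => hne (ha1.symm.trans h.1))]
        rw [h2, Pi.single_eq_of_ne (fun h => hbswap_ne h.symm), Pi.single_eq_same]
        by_cases hlt : (b jf : ℕ) < (b jf' : ℕ)
        · rw [if_pos ⟨rfl, rfl, hlt⟩, if_pos hlt]; ring
        · rw [if_neg (fun h => hlt h.2.2), if_neg hlt]; ring
      · rw [if_neg (fun h => h1 (key _ (by simpa using h.1) (by simpa using h.2) hCk')),
          if_neg (fun h => h2 (key _ h.1 h.2.1 hCk)),
          Pi.single_eq_of_ne h1, Pi.single_eq_of_ne h2]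
        ring
  · have h1 : a ≠ b ∘ Equiv.swap jf jf' := by
      intro h
      refine hC fun k hk1 hk2 => ?_
      have hkx : k ≠ jf := by simp only [hjf, Fin.ext_iff, ne_eq]; omega
      have hky : k ≠ jf' := by simp only [hjf', Fin.ext_iff, ne_eq]; omega
      rw [h]
      simp [Equiv.swap_apply_of_ne_of_ne hkx hky]
    have h2 : a ≠ b := fun h => hC fun k _ _ => congrFun h k
    rw [if_neg hC, Pi.single_eq_of_ne h1, Pi.single_eq_of_ne h2]
    ring

def invCount {d : ℕ} (τ : Equiv.Perm (Fin d)) : ℕ :=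
  ((Finset.univ : Finset (Fin d × Fin d)).filter
    (fun p => p.1 < p.2 ∧ τ p.2 < τ p.1)).card

lemma exists_descent {d : ℕ} (τ : Equiv.Perm (Fin d)) (hτ : τ ≠ 1) :
    ∃ (j : ℕ) (hj : j + 1 < d), τ ⟨j + 1, hj⟩ < τ ⟨j, Nat.lt_of_succ_lt hj⟩ := by
  by_contra hcon
  push_neg at hcon
  apply hτ
  have hsm : StrictMono τ := by
    cases d with
    | zero => intro a; exact absurd a.2 (by omega)
    | succ e =>
      rw [Fin.strictMono_iff_lt_succ]
      intro i
      have h2 : (i : ℕ) + 1 < e + 1 := by omega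
      have := hcon i.1 h2
      have he1 : (⟨(i : ℕ), by omega⟩ : Fin (e+1)) = Fin.castSucc i := by
        simp [Fin.ext_iff]
      have he2 : (⟨(i : ℕ) + 1, h2⟩ : Fin (e+1)) = i.succ := by
        simp [Fin.ext_iff]
      rw [he1, he2] at this
      rcases lt_or_eq_of_le this with h | h
      · exact h
      · exact absurd (τ.injective h) (by simp [Fin.ext_iff])
  have heq := Subsingleton.elim (StrictMono.orderIsoOfSurjective τ hsm τ.surjective)
    (OrderIso.refl (Fin d))
  ext x
  have : (StrictMono.orderIsoOfSurjective τ hsm τ.surjective) x = x := by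
    rw [heq]; rfl
  rw [show ⇑(StrictMono.orderIsoOfSurjective ⇑τ hsm τ.surjective) = ⇑τ from
    StrictMono.coe_orderIsoOfSurjective ⇑τ hsm τ.surjective] at this
  simp [this]

lemma invCount_lt {d : ℕ} (τ : Equiv.Perm (Fin d)) (j : ℕ) (hj : j + 1 < d)
    (hdesc : τ ⟨j + 1, hj⟩ < τ ⟨j, Nat.lt_of_succ_lt hj⟩) :
    invCount (τ * Equiv.swap ⟨j, Nat.lt_of_succ_lt hj⟩ ⟨j + 1, hj⟩) < invCount τ := by
  classical
  set jf : Fin d := ⟨j, Nat.lt_of_succ_lt hj⟩ with hjfdef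
  set jf' : Fin d := ⟨j + 1, hj⟩ with hjfdef'
  have hjlt : jf < jf' := by simp [hjfdef, hjfdef', Fin.lt_def]
  set s := Equiv.swap jf jf' with hsdef
  have hval : ∀ x : Fin d, ((x : ℕ) = j ∧ (s x : ℕ) = j + 1) ∨
      ((x : ℕ) = j + 1 ∧ (s x : ℕ) = j) ∨
      ((x : ℕ) ≠ j ∧ (x : ℕ) ≠ j + 1 ∧ (s x : ℕ) = (x : ℕ)) := by
    intro x
    rcases eq_or_ne x jf with rfl | h1
    · left; exact ⟨rfl, by rw [hsdef, Equiv.swap_apply_left]⟩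
    · rcases eq_or_ne x jf' with rfl | h2
      · right; left; exact ⟨rfl, by rw [hsdef, Equiv.swap_apply_right]⟩
      · right; right
        refine ⟨fun h => h1 (Fin.ext h), fun h => h2 (Fin.ext h),
          by rw [hsdef, Equiv.swap_apply_of_ne_of_ne h1 h2]⟩
  have hmem : (jf, jf') ∈ (Finset.univ : Finset (Fin d × Fin d)).filter
      (fun p => p.1 < p.2 ∧ τ p.2 < τ p.1) := by
    simp only [Finset.mem_filter, Finset.mem_univ, true_and]
    exact ⟨hjlt, hdesc⟩
  rw [invCount, invCount]
  refine lt_of_le_of_lt ?_ (Finset.card_erase_lt_of_mem hmem)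
  apply Finset.card_le_card_of_injOn (fun p => (s p.1, s p.2))
  · rintro ⟨a, b⟩ hab
    replace hab : (a, b) ∈ (Finset.univ : Finset (Fin d × Fin d)).filter
        (fun p => p.1 < p.2 ∧ (τ * s) p.2 < (τ * s) p.1) := hab
    replace hab := (Finset.mem_filter.mp hab).2
    simp only [Finset.mem_coe, Finset.mem_filter, Finset.mem_univ, true_and, Equiv.Perm.mul_apply] at hab
    obtain ⟨hab1, hab2⟩ := hab
    have hab2' : τ (s b) < τ (s a) := hab2
    rw [Fin.lt_def] at hab1
    have Ha := hval a
    have Hb := hval b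
    simp only [Finset.mem_coe, Finset.mem_erase, Finset.mem_filter, Finset.mem_univ, true_and]
    refine ⟨?_, ?_, hab2'⟩
    · intro h
      have h1 : (s a : ℕ) = j := congrArg (fun p : Fin d × Fin d => (p.1 : ℕ)) h
      have h2 : (s b : ℕ) = j + 1 := congrArg (fun p : Fin d × Fin d => (p.2 : ℕ)) h
      omega
    · rw [Fin.lt_def]
      by_cases hex : (a : ℕ) = j ∧ (b : ℕ) = j + 1
      · exfalso
        have ha : a = jf := Fin.ext hex.1
        have hb : b = jf' := Fin.ext hex.2
        subst ha; subst hb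
        rw [hsdef, Equiv.swap_apply_left, Equiv.swap_apply_right] at hab2'
        exact lt_asymm hdesc hab2'
      · omega
  · rintro ⟨a, b⟩ - ⟨a', b'⟩ - h
    have h1 : s a = s a' := congrArg Prod.fst h
    have h2 : s b = s b' := congrArg Prod.snd h
    exact Prod.ext (s.injective h1) (s.injective h2)

/-- for d < m+n and any permutation τ ∈ S_d, the weight-λ_d basis
vector w_τ = ε_{τ(1)}⊗...⊗ε_{τ(d)} of V^{⊗d} is a nonzero scalar multiple of
h·w for some h in the subalgebra of End(V^{⊗d}) generated by the Řⱼ, where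
w = ε₁⊗...⊗ε_d. -/
theorem weight_vector_cyclic (m n d : ℕ) (hm : 1 ≤ m) (hn : 1 ≤ n) (hd : 1 ≤ d)
    (hdn : d < m + n) (τ : Equiv.Perm (Fin d)) :
    ∃ h : Module.End K ((Fin d → Fin (m + n)) → K),
      h ∈ Algebra.adjoin K
          {f : Module.End K ((Fin d → Fin (m + n)) → K) |
            ∃ (j : ℕ) (hj : j + 1 < d), f = (Rop m (m + n) d j hj).mulVecLin} ∧
      ∃ c : K, c ≠ 0 ∧
        Pi.single (fun k : Fin d => Fin.castLE (Nat.le_of_lt hdn) (τ k)) (1 : K) =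
          c • h (Pi.single (fun k : Fin d => Fin.castLE (Nat.le_of_lt hdn) k) (1 : K)) := by
  suffices H : ∀ (kk : ℕ) (τ : Equiv.Perm (Fin d)), invCount τ = kk →
      ∃ h : Module.End K ((Fin d → Fin (m + n)) → K),
      h ∈ Algebra.adjoin K
          {f : Module.End K ((Fin d → Fin (m + n)) → K) |
            ∃ (j : ℕ) (hj : j + 1 < d), f = (Rop m (m + n) d j hj).mulVecLin} ∧
      ∃ c : K, c ≠ 0 ∧
        Pi.single (fun k : Fin d => Fin.castLE (Nat.le_of_lt hdn) (τ k)) (1 : K) =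
          c • h (Pi.single (fun k : Fin d => Fin.castLE (Nat.le_of_lt hdn) k) (1 : K)) by
    exact H _ τ rfl
  intro kk
  induction kk using Nat.strong_induction_on with
  | _ kk IH =>
    intro τ hk
    by_cases hτ : τ = 1
    · subst hτ
      refine ⟨1, Subalgebra.one_mem _, 1, one_ne_zero, ?_⟩
      simp
    · obtain ⟨j, hj, hdesc⟩ := exists_descent τ hτ
      set jf : Fin d := ⟨j, Nat.lt_of_succ_lt hj⟩ with hjfdef
      set jf' : Fin d := ⟨j + 1, hj⟩ with hjfdef'
      set σ := τ * Equiv.swap jf jf' with hσ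
      have hlt := invCount_lt τ j hj hdesc
      obtain ⟨h, hmemh, c, hc0, hceq⟩ := IH (invCount σ) (hk ▸ hlt) σ rfl
      set b : Fin d → Fin (m + n) := fun k => Fin.castLE (Nat.le_of_lt hdn) (σ k) with hb
      have hbne : b jf ≠ b jf' := by
        intro h'
        have h'' := σ.injective (Fin.castLE_injective (Nat.le_of_lt hdn) h')
        simp [hjfdef, hjfdef', Fin.ext_iff] at h''
      have hRop := Rop_single m (m + n) d j hj b hbne
      have hbsw : b ∘ Equiv.swap jf jf' =
          fun k : Fin d => Fin.castLE (Nat.le_of_lt hdn) (τ k) := by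
        funext k
        simp only [Function.comp_apply, hb, hσ, Equiv.Perm.mul_apply, Equiv.swap_apply_self]
      set sgn : K := (-1 : K) ^ (par m (b jf) * par m (b jf')) with hsgn
      set δ : K := if ((b jf : ℕ) < (b jf' : ℕ)) then q - q⁻¹ else 0 with hδ
      have hsgn_sq : sgn * sgn = 1 := by
        rw [hsgn, ← pow_add, ← two_mul, pow_mul]
        norm_num
      have hsgn0 : sgn ≠ 0 := by
        rw [hsgn]
        exact pow_ne_zero _ (by norm_num)
      set f : Module.End K ((Fin d → Fin (m + n)) → K) :=
        (Rop m (m + n) d j hj).mulVecLin with hf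
      have hfmem : (f - δ • 1) * h ∈ Algebra.adjoin K
          {g : Module.End K ((Fin d → Fin (m + n)) → K) |
            ∃ (j' : ℕ) (hj' : j' + 1 < d), g = (Rop m (m + n) d j' hj').mulVecLin} :=
        mul_mem (sub_mem (Algebra.subset_adjoin ⟨j, hj, rfl⟩)
          (Subalgebra.smul_mem _ (Subalgebra.one_mem _) δ)) hmemh
      set bs : Fin d → Fin (m + n) := b ∘ Equiv.swap jf jf' with hbs
      have hRop' : f (Pi.single b (1 : K)) =
          sgn • (Pi.single bs (1 : K) : (Fin d → Fin (m + n)) → K)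
          + δ • (Pi.single b (1 : K) : (Fin d → Fin (m + n)) → K) :=
        hRop
      have hbsw' : bs = fun k : Fin d => Fin.castLE (Nat.le_of_lt hdn) (τ k) := hbsw
      clear hRop hbsw hbne hdesc hlt hk hτ hδ hsgn hf hbs hb hσ
      clear_value f δ sgn bs b σ jf' jf
      refine ⟨(f - δ • 1) * h, hfmem, sgn * c, mul_ne_zero hsgn0 hc0, ?_⟩
      calc Pi.single (fun k : Fin d => Fin.castLE (Nat.le_of_lt hdn) (τ k)) (1 : K)
          = (Pi.single bs (1 : K) : (Fin d → Fin (m + n)) → K) := by rw [hbsw']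
        _ = sgn • (f (Pi.single b (1 : K)) -
            δ • (Pi.single b (1 : K) : (Fin d → Fin (m + n)) → K)) := by
            rw [hRop', add_sub_cancel_right, smul_smul, hsgn_sq, one_smul]
        _ = (sgn * c) • (((f - δ • 1) * h)
            (Pi.single (fun k : Fin d => Fin.castLE (Nat.le_of_lt hdn) k) (1 : K))) := by
            rw [hceq]
            simp only [Module.End.mul_apply, LinearMap.sub_apply, LinearMap.smul_apply,
              Module.End.one_apply, map_smul, smul_sub, smul_smul]
            ring_nf

end
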